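/- Fix (i,k) with i' < k and regard P_{ik}(Z,X) as a polynomial in the 2n² variables z_{ab}, x_{ab}. Then P_{ik}(Z,X) = f₀·x_{i',k'} + f₁, where f₀ and f₁ are polynomials involving only the variables z_{ab} and the variables x_{ab} with (a,b) ≺ (i',k'), and f₀ is a nonzero polynomial. (Note (i',k') lies above the anti-diagonal when (i,k) lies below it; order on pairs: (a,b) ≺ (c,d) iff b < d, or b = d and a > c.) -/
import Mathlib


open Matrix

/-- Entry of an `n × n` matrix in 1-based indexing; `0` outside the range `[1,n]²`. -/
def ent {R : Type*} [Zero R] {n : ℕ} (X : Matrix (Fin n) (Fin n) R) (a b : ℕ) : R :=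
  if h : 1 ≤ a ∧ a ≤ n ∧ 1 ≤ b ∧ b ≤ n then X ⟨a - 1, by omega⟩ ⟨b - 1, by omega⟩ else 0

/-- `Dmin k X`: the left lower corner minor of order `n - k + 1`;
rows `k,…,n`, columns `1,…,n-k+1` (1-based). -/
noncomputable def Dmin {R : Type*} [CommRing R] {n : ℕ} (k : ℕ)
    (X : Matrix (Fin n) (Fin n) R) : R :=
  (Matrix.of fun r c : Fin (n + 1 - k) => ent X (k + r.val) (1 + c.val)).det

/-- `Mmin i j X`: minor of order `n - i + 1` with rows `i,…,n` and
columns `1,…,n-i` together with column `j` (1-based). -/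
noncomputable def Mmin {R : Type*} [CommRing R] {n : ℕ} (i j : ℕ)
    (X : Matrix (Fin n) (Fin n) R) : R :=
  (Matrix.of fun r c : Fin (n + 1 - i) =>
    ent X (i + r.val) (if c.val < n - i then 1 + c.val else j)).det

/-- `Nmin j k Y`: minor of order `n - k + 1` with rows `{j} ∪ {k+1,…,n}` and
columns `1,…,n-k+1` (1-based). -/
noncomputable def Nmin {R : Type*} [CommRing R] {n : ℕ} (j k : ℕ)
    (Y : Matrix (Fin n) (Fin n) R) : R :=
  (Matrix.of fun r c : Fin (n + 1 - k) =>
    ent Y (if r.val = 0 then j else k + r.val) (1 + c.val)).det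

/-- `Pmin i k X Y = Σ_{j=i'}^{k} M_{ij}(X) N_{jk}(Y)`, where `i' = n - i + 1`. -/
noncomputable def Pmin {R : Type*} [CommRing R] {n : ℕ} (i k : ℕ)
    (X Y : Matrix (Fin n) (Fin n) R) : R :=
  ∑ j ∈ Finset.Icc (n + 1 - i) k, Mmin i j X * Nmin j k Y

/-- `Rminus i k X Y`: determinant of the `k × k` matrix whose first `n - i + 1` rows are
rows `i,…,n` of `X` restricted to columns `1,…,k`, and whose remaining rows are the last
`k - (n - i + 1)` rows of `Y` restricted to columns `1,…,k`. -/
noncomputable def Rminus {R : Type*} [CommRing R] {n : ℕ} (i k : ℕ)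
    (X Y : Matrix (Fin n) (Fin n) R) : R :=
  (Matrix.of fun r c : Fin k =>
    if r.val < n + 1 - i then ent X (i + r.val) (1 + c.val)
    else ent Y (n - k + 1 + r.val) (1 + c.val)).det

/-- `Rplus i k Z X`: determinant of the `(n-i+1) × (n-i+1)` matrix whose first
`(n-i+1) - k` columns are columns `1,…,(n-i+1)-k` of `Z` restricted to rows `i,…,n`,
and whose last `k` columns are columns `1,…,k` of `X` restricted to rows `i,…,n`. -/
noncomputable def Rplus {R : Type*} [CommRing R] {n : ℕ} (i k : ℕ)
    (Z X : Matrix (Fin n) (Fin n) R) : R :=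
  (Matrix.of fun r c : Fin (n + 1 - i) =>
    if c.val < n + 1 - i - k then ent Z (i + r.val) (1 + c.val)
    else ent X (i + r.val) (c.val - (n + 1 - i - k) + 1)).det

/-- Square minor of order `m` with rows `r₀, r₀+1, …` and columns `c₀, c₀+1, …` (1-based). -/
noncomputable def RectMinor {R : Type*} [CommRing R] {n : ℕ} (r₀ c₀ m : ℕ)
    (X : Matrix (Fin n) (Fin n) R) : R :=
  (Matrix.of fun r c : Fin m => ent X (r₀ + r.val) (c₀ + c.val)).det

/-- `u` is upper triangular with ones on the diagonal. -/
def IsUT {R : Type*} [CommRing R] {n : ℕ} (u : Matrix (Fin n) (Fin n) R) : Prop :=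
  (∀ i, u i i = 1) ∧ ∀ i j : Fin n, (j : ℕ) < (i : ℕ) → u i j = 0

/-- Anti-diagonal matrix: entries off the anti-diagonal vanish (0-based: `a + b = n - 1`). -/
def AntiDiag {R : Type*} [Zero R] {n : ℕ} (X : Matrix (Fin n) (Fin n) R) : Prop :=
  ∀ a b : Fin n, (a : ℕ) + (b : ℕ) ≠ n - 1 → X a b = 0

/-- Lower anti-triangular: entries above the anti-diagonal vanish. -/
def LowerAnti {R : Type*} [Zero R] {n : ℕ} (X : Matrix (Fin n) (Fin n) R) : Prop :=
  ∀ a b : Fin n, (a : ℕ) + (b : ℕ) < n - 1 → X a b = 0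

/-- Upper anti-triangular: entries below the anti-diagonal vanish. -/
def UpperAnti {R : Type*} [Zero R] {n : ℕ} (X : Matrix (Fin n) (Fin n) R) : Prop :=
  ∀ a b : Fin n, n - 1 < (a : ℕ) + (b : ℕ) → X a b = 0


lemma ent_of_le {R : Type*} [Zero R] {n : ℕ} (X : Matrix (Fin n) (Fin n) R) {a b : ℕ}
    (ha1 : 1 ≤ a) (ha2 : a ≤ n) (hb1 : 1 ≤ b) (hb2 : b ≤ n) :
    ent X a b = X ⟨a - 1, by omega⟩ ⟨b - 1, by omega⟩ :=
  dif_pos ⟨ha1, ha2, hb1, hb2⟩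

open MvPolynomial in
lemma mem_vars_det {R σ' : Type*} [CommRing R] [DecidableEq σ'] {m : ℕ}
    {M : Matrix (Fin m) (Fin m) (MvPolynomial σ' R)} {v : σ'}
    (hv : v ∈ M.det.vars) : ∃ r c, v ∈ (M r c).vars := by
  rw [Matrix.det_apply'] at hv
  obtain ⟨σ, -, hσ⟩ := Finset.mem_biUnion.1 (MvPolynomial.vars_sum_subset _ _ hv)
  have h2 := MvPolynomial.vars_mul _ _ hσ
  rw [Finset.mem_union] at h2
  rcases h2 with h | h
  · exfalso
    rw [show ((Equiv.Perm.sign σ : ℤ) : MvPolynomial σ' R)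
        = C ((Equiv.Perm.sign σ : ℤ) : R) from (map_intCast (C : R →+* MvPolynomial σ' R) _).symm,
      vars_C] at h
    exact absurd h (Finset.notMem_empty v)
  · obtain ⟨r, -, hr⟩ := Finset.mem_biUnion.1 (MvPolynomial.vars_prod _ h)
    exact ⟨σ r, r, hr⟩

open MvPolynomial in
lemma vars_ent_sub {K σ' : Type*} [Field K] {n : ℕ} (g : Fin n × Fin n → σ') (a b : ℕ) {v : σ'}
    (hv : v ∈ (ent (Matrix.of fun p q : Fin n => (X (g (p, q)) : MvPolynomial σ' K)) a b).vars) :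
    ∃ (ha1 : 1 ≤ a) (ha2 : a ≤ n) (hb1 : 1 ≤ b) (hb2 : b ≤ n),
      v = g (⟨a - 1, by omega⟩, ⟨b - 1, by omega⟩) := by
  unfold ent at hv
  split at hv
  · rename_i h
    rw [Matrix.of_apply, MvPolynomial.vars_X, Finset.mem_singleton] at hv
    exact ⟨h.1, h.2.1, h.2.2.1, h.2.2.2, hv⟩
  · rw [MvPolynomial.vars_0] at hv
    exact absurd hv (Finset.notMem_empty v)

set_option maxHeartbeats 4000000 in
open MvPolynomial in
/-- regarded as a polynomial in the `2n²` variables `z_{ab}, x_{ab}`,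
`P_{ik}(Z,X) = f₀ · x_{i',k'} + f₁` (with `i' = n-i+1`, `k' = n-k+1`) where `f₀ ≠ 0` and
`f₀, f₁` involve only the variables `z_{ab}` and the variables `x_{ab}` with
`(a,b) ≺ (i',k')` (`(a,b) ≺ (c,d)` iff `b < d`, or `b = d` and `a > c`).
Here `z`-variables are `Sum.inl` and `x`-variables are `Sum.inr`. -/
theorem Pmin_triangular_above {K : Type*} [Field K] {n : ℕ}
    (i k : ℕ) (hi1 : 1 ≤ i) (hi2 : i ≤ n) (hk : k ≤ n) (hik : n + 1 - i < k) :
    ∃ f₀ f₁ : MvPolynomial ((Fin n × Fin n) ⊕ (Fin n × Fin n)) K,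
      f₀ ≠ 0 ∧
      Pmin i k
          (Matrix.of fun a b : Fin n => (X (Sum.inl (a, b)) : MvPolynomial _ K))
          (Matrix.of fun a b : Fin n => (X (Sum.inr (a, b)) : MvPolynomial _ K))
        = f₀ * X (Sum.inr (⟨n - i, by omega⟩, ⟨n - k, by omega⟩)) + f₁ ∧
      (∀ v ∈ f₀.vars,
        Sum.elim (fun _ : Fin n × Fin n => True) (fun p : Fin n × Fin n =>
          (p.2 : ℕ) + 1 < n + 1 - k ∨
            ((p.2 : ℕ) + 1 = n + 1 - k ∧ n + 1 - i < (p.1 : ℕ) + 1)) v) ∧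
      (∀ v ∈ f₁.vars,
        Sum.elim (fun _ : Fin n × Fin n => True) (fun p : Fin n × Fin n =>
          (p.2 : ℕ) + 1 < n + 1 - k ∨
            ((p.2 : ℕ) + 1 = n + 1 - k ∧ n + 1 - i < (p.1 : ℕ) + 1)) v) := by
  classical
  have hm : 0 < n + 1 - k := by omega
  set Zp : Matrix (Fin n) (Fin n) (MvPolynomial ((Fin n × Fin n) ⊕ (Fin n × Fin n)) K) :=
    Matrix.of fun a b => X (Sum.inl (a, b)) with hZp
  set Xp : Matrix (Fin n) (Fin n) (MvPolynomial ((Fin n × Fin n) ⊕ (Fin n × Fin n)) K) :=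
    Matrix.of fun a b => X (Sum.inr (a, b)) with hXp
  set xv : MvPolynomial ((Fin n × Fin n) ⊕ (Fin n × Fin n)) K :=
    X (Sum.inr (⟨n - i, by omega⟩, ⟨n - k, by omega⟩)) with hxv
  set z0 : Fin (n + 1 - k) := ⟨0, hm⟩ with hz0
  set lst : Fin (n + 1 - k) := ⟨n - k, by omega⟩ with hlst
  set Nmat : Matrix (Fin (n + 1 - k)) (Fin (n + 1 - k))
      (MvPolynomial ((Fin n × Fin n) ⊕ (Fin n × Fin n)) K) :=
    Matrix.of fun r c => ent Xp (if r.val = 0 then n + 1 - i else k + r.val) (1 + c.val)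
    with hNmat
  set Cof := Nmat.updateRow z0 (Pi.single lst 1) with hCof
  set Rem := Nmat.updateRow z0 (fun c => if c = lst then 0 else Nmat z0 c) with hRem
  have hMZ : ∀ (j : ℕ) (v' : (Fin n × Fin n) ⊕ (Fin n × Fin n)),
      v' ∈ (Mmin i j (Matrix.of fun a b : Fin n =>
          (X (Sum.inl (a, b)) : MvPolynomial ((Fin n × Fin n) ⊕ (Fin n × Fin n)) K))).vars →
      Sum.elim (fun _ : Fin n × Fin n => True) (fun p : Fin n × Fin n =>
        (p.2 : ℕ) + 1 < n + 1 - k ∨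
          ((p.2 : ℕ) + 1 = n + 1 - k ∧ n + 1 - i < (p.1 : ℕ) + 1)) v' := by
    intro j v' hv'
    obtain ⟨r, c, hrc⟩ := mem_vars_det (M := Matrix.of fun r c : Fin (n + 1 - i) =>
      ent (Matrix.of fun a b : Fin n =>
          (X (Sum.inl (a, b)) : MvPolynomial ((Fin n × Fin n) ⊕ (Fin n × Fin n)) K))
        (i + r.val) (if c.val < n - i then 1 + c.val else j)) hv'
    obtain ⟨_, _, _, _, hvv⟩ := vars_ent_sub Sum.inl _ _ hrc
    rw [hvv]; exact trivial
  have hNX : ∀ (a : ℕ), n + 1 - i < a → ∀ (c : Fin (n + 1 - k))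
      (v' : (Fin n × Fin n) ⊕ (Fin n × Fin n)),
      v' ∈ (ent (Matrix.of fun a b : Fin n =>
          (X (Sum.inr (a, b)) : MvPolynomial ((Fin n × Fin n) ⊕ (Fin n × Fin n)) K))
        a (1 + (c : ℕ))).vars →
      Sum.elim (fun _ : Fin n × Fin n => True) (fun p : Fin n × Fin n =>
        (p.2 : ℕ) + 1 < n + 1 - k ∨
          ((p.2 : ℕ) + 1 = n + 1 - k ∧ n + 1 - i < (p.1 : ℕ) + 1)) v' := by
    intro a ha c v' hv'
    obtain ⟨h1, h2, h3, h4, hvv⟩ := vars_ent_sub Sum.inr _ _ hv'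
    rw [hvv]
    have hc := c.isLt
    show (1 + (c : ℕ) - 1) + 1 < n + 1 - k ∨
      ((1 + (c : ℕ) - 1) + 1 = n + 1 - k ∧ n + 1 - i < (a - 1) + 1)
    omega
  refine ⟨Mmin i (n + 1 - i) Zp * Cof.det,
          Mmin i (n + 1 - i) Zp * Rem.det
            + ∑ j ∈ (Finset.Icc (n + 1 - i) k).erase (n + 1 - i), Mmin i j Zp * Nmin j k Xp,
          ?_, ?_, ?_, ?_⟩
  · -- f₀ ≠ 0
    set φ : ((Fin n × Fin n) ⊕ (Fin n × Fin n)) → K :=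
      Sum.elim (fun p => if (p.1 : ℕ) + 1 = (p.2 : ℕ) + i then 1 else 0)
               (fun p => if (p.1 : ℕ) = k + (p.2 : ℕ) then 1 else 0) with hφ
    intro h0
    have hev := congrArg (MvPolynomial.eval φ) h0
    rw [_root_.map_mul, _root_.map_zero] at hev
    have h1 : MvPolynomial.eval φ (Mmin i (n + 1 - i) Zp) = 1 := by
      rw [show Mmin i (n + 1 - i) Zp
          = (Matrix.of fun r c : Fin (n + 1 - i) =>
              ent Zp (i + r.val) (if c.val < n - i then 1 + c.val else n + 1 - i)).det from rfl,
        RingHom.map_det]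
      have hmap : (Matrix.of fun r c : Fin (n + 1 - i) =>
            ent Zp (i + r.val) (if c.val < n - i then 1 + c.val else n + 1 - i)).map
            (MvPolynomial.eval φ) = (1 : Matrix (Fin (n + 1 - i)) (Fin (n + 1 - i)) K) := by
        ext r c
        have hcol : (if (c : ℕ) < n - i then 1 + (c : ℕ) else n + 1 - i) = 1 + (c : ℕ) := by
          rcases Nat.lt_or_ge (c : ℕ) (n - i) with h | h
          · rw [if_pos h]
          · rw [if_neg (by omega)]; have := c.isLt; omega
        rw [Matrix.map_apply]
        rw [Matrix.of_apply]
        rw [hcol]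
        rw [ent_of_le Zp (by omega) (by have := r.isLt; omega) (by omega)
            (by have := c.isLt; omega)]
        rw [hZp]
        rw [Matrix.of_apply]
        rw [MvPolynomial.eval_X]
        rw [hφ]
        rw [Sum.elim_inl]
        by_cases hrc : r = c
        · subst hrc
          rw [Matrix.one_apply_eq,
            if_pos (show i + (r : ℕ) - 1 + 1 = 1 + (r : ℕ) - 1 + i by omega)]
        · rw [Matrix.one_apply_ne hrc, if_neg]
          intro hP
          have hP' : i + (r : ℕ) - 1 + 1 = 1 + (c : ℕ) - 1 + i := hP
          exact hrc (Fin.ext (by omega))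
      rw [RingHom.mapMatrix_apply, hmap, Matrix.det_one]
    let σp : Equiv.Perm (Fin (n + 1 - k)) :=
      { toFun := fun r => if (r : ℕ) = 0 then lst else ⟨(r : ℕ) - 1, by have := r.isLt; omega⟩
        invFun := fun c => if h : (c : ℕ) = n - k then z0 else ⟨(c : ℕ) + 1, by have := c.isLt; omega⟩
        left_inv := by
          intro r
          dsimp only
          by_cases hr : (r : ℕ) = 0
          · rw [if_pos hr, dif_pos (show (lst : ℕ) = n - k from rfl)]
            exact Fin.ext hr.symm
          · rw [if_neg hr, dif_neg (show ¬((r : ℕ) - 1 = n - k) by have := r.isLt; omega)]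
            exact Fin.ext (show (r : ℕ) - 1 + 1 = (r : ℕ) by omega)
        right_inv := by
          intro c
          dsimp only
          by_cases hc : (c : ℕ) = n - k
          · rw [dif_pos hc, if_pos (show (z0 : ℕ) = 0 from rfl)]
            exact Fin.ext hc.symm
          · rw [dif_neg hc, if_neg (show ¬((c : ℕ) + 1 = 0) by omega)]
            exact Fin.ext (show (c : ℕ) + 1 - 1 = (c : ℕ) by omega) }
    have hσ : ∀ r : Fin (n + 1 - k),
        σp r = if (r : ℕ) = 0 then lst else ⟨(r : ℕ) - 1, by have := r.isLt; omega⟩ :=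
      fun r => rfl
    have h2 : Cof.map (MvPolynomial.eval φ) = σp.permMatrix K := by
      ext r c
      rw [Matrix.map_apply]
      simp only [Equiv.Perm.permMatrix, PEquiv.toMatrix_apply, Equiv.toPEquiv_apply,
        Option.mem_some_iff]
      by_cases hr : r = z0
      · subst hr
        rw [hCof, Matrix.updateRow_self, Pi.single_apply, hσ,
          if_pos (show (z0 : ℕ) = 0 from rfl)]
        by_cases hc : c = lst
        · rw [if_pos hc, _root_.map_one, if_pos hc.symm]
        · rw [if_neg hc, _root_.map_zero, if_neg (fun h => hc h.symm)]
      · have hr0 : (r : ℕ) ≠ 0 := fun h' => hr (Fin.ext h')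
        rw [hCof, Matrix.updateRow_ne hr]
        rw [hNmat, Matrix.of_apply, if_neg hr0]
        rw [ent_of_le Xp (by omega) (by have := r.isLt; omega) (by omega)
            (by have := c.isLt; omega)]
        rw [hXp, Matrix.of_apply, MvPolynomial.eval_X]
        rw [hφ, Sum.elim_inr]
        rw [hσ, if_neg hr0]
        by_cases hc : (c : ℕ) = (r : ℕ) - 1
        · rw [if_pos (show k + (r : ℕ) - 1 = k + (1 + (c : ℕ) - 1) by omega),
            if_pos (Fin.ext (show (r : ℕ) - 1 = (c : ℕ) from hc.symm))]
        · rw [if_neg, if_neg]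
          · exact fun h => hc (congrArg Fin.val h).symm
          · intro hP
            have hP' : k + (r : ℕ) - 1 = k + (1 + (c : ℕ) - 1) := hP
            omega
    rw [RingHom.map_det, RingHom.mapMatrix_apply, h2, Matrix.det_permutation, h1, one_mul] at hev
    rcases Int.units_eq_one_or (Equiv.Perm.sign σp) with hs | hs <;>
      rw [hs] at hev <;> simp at hev
  · -- the decomposition identity
    have hsplit : Pmin i k Zp Xp
        = Mmin i (n + 1 - i) Zp * Nmin (n + 1 - i) k Xp
          + ∑ j ∈ (Finset.Icc (n + 1 - i) k).erase (n + 1 - i), Mmin i j Zp * Nmin j k Xp := by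
      rw [Pmin, ← Finset.add_sum_erase _ _ (Finset.mem_Icc.2 ⟨le_refl _, by omega⟩)]
    have hrow : Nmat z0 = (fun c => if c = lst then 0 else Nmat z0 c) + Pi.single lst xv := by
      funext c
      by_cases hc : c = lst
      · subst hc
        rw [Pi.add_apply, if_pos rfl, Pi.single_eq_same, zero_add, hNmat]
        rw [Matrix.of_apply, if_pos rfl,
          ent_of_le Xp (by omega) (by omega) (by omega) (by omega)]
        have e1 : (⟨n + 1 - i - 1, by omega⟩ : Fin n) = ⟨n - i, by omega⟩ := Fin.ext (show n + 1 - i - 1 = n - i by omega)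
        have e2 : (⟨1 + (lst : ℕ) - 1, by omega⟩ : Fin n) = ⟨n - k, by omega⟩ :=
          Fin.ext (show 1 + (n - k) - 1 = n - k by omega)
        rw [e1, e2, hXp, Matrix.of_apply, hxv]
      · rw [Pi.add_apply, if_neg hc, Pi.single_eq_of_ne hc, add_zero]
    have hsingle : (Pi.single lst xv : Fin (n + 1 - k) →
        MvPolynomial ((Fin n × Fin n) ⊕ (Fin n × Fin n)) K)
        = xv • (Pi.single lst 1 : Fin (n + 1 - k) → MvPolynomial ((Fin n × Fin n) ⊕ (Fin n × Fin n)) K) := by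
      funext c
      by_cases hc : c = lst
      · subst hc; simp
      · simp [Pi.single_eq_of_ne hc]
    have hN : Nmin (n + 1 - i) k Xp = Rem.det + xv * Cof.det := by
      rw [show Nmin (n + 1 - i) k Xp = Nmat.det from rfl]
      rw [← Matrix.updateRow_eq_self Nmat z0]
      rw [hrow]
      rw [Matrix.det_updateRow_add]
      rw [hsingle]
      rw [Matrix.det_updateRow_smul]
    rw [hsplit, hN]; ring
  · -- vars of f₀
    intro v hv
    rcases Finset.mem_union.1 (MvPolynomial.vars_mul _ _ hv) with h | h
    · exact hMZ _ v h
    · obtain ⟨r, c, hrc⟩ := mem_vars_det h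
      by_cases hr : r = z0
      · subst hr
        rw [hCof, Matrix.updateRow_self, Pi.single_apply] at hrc
        by_cases hc : c = lst
        · rw [if_pos hc, MvPolynomial.vars_one] at hrc
          exact absurd hrc (Finset.notMem_empty v)
        · rw [if_neg hc, MvPolynomial.vars_0] at hrc
          exact absurd hrc (Finset.notMem_empty v)
      · have hr0 : (r : ℕ) ≠ 0 := fun h' => hr (Fin.ext h')
        rw [hCof, Matrix.updateRow_ne hr, hNmat] at hrc
        exact hNX (if (r : ℕ) = 0 then n + 1 - i else k + (r : ℕ))
          (by rw [if_neg hr0]; omega) c v hrc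
  · -- vars of f₁
    intro v hv
    rcases Finset.mem_union.1 (MvPolynomial.vars_add_subset _ _ hv) with h | h
    · rcases Finset.mem_union.1 (MvPolynomial.vars_mul _ _ h) with h' | h'
      · exact hMZ _ v h'
      · obtain ⟨r, c, hrc⟩ := mem_vars_det h'
        by_cases hr : r = z0
        · subst hr
          rw [hRem, Matrix.updateRow_self] at hrc
          by_cases hc : c = lst
          · rw [if_pos hc, MvPolynomial.vars_0] at hrc
            exact absurd hrc (Finset.notMem_empty v)
          · rw [if_neg hc, hNmat] at hrc
            have hc0 : (c : ℕ) ≠ n - k := fun h'' => hc (Fin.ext h'')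
            have hrc' : v ∈ (ent Xp (n + 1 - i) (1 + (c : ℕ))).vars := by
              rw [Matrix.of_apply, if_pos (show ((z0 : Fin (n + 1 - k)) : ℕ) = 0 from rfl)] at hrc
              exact hrc
            obtain ⟨h1, h2, h3, h4, hvv⟩ := vars_ent_sub Sum.inr _ _ hrc'
            rw [hvv]
            have hclt := c.isLt
            show (1 + (c : ℕ) - 1) + 1 < n + 1 - k ∨
              ((1 + (c : ℕ) - 1) + 1 = n + 1 - k ∧ n + 1 - i < (n + 1 - i - 1) + 1)
            omega
        · have hr0 : (r : ℕ) ≠ 0 := fun h' => hr (Fin.ext h')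
          rw [hRem, Matrix.updateRow_ne hr, hNmat] at hrc
          exact hNX (if (r : ℕ) = 0 then n + 1 - i else k + (r : ℕ))
            (by rw [if_neg hr0]; omega) c v hrc
    · obtain ⟨j, hj, hjv⟩ := Finset.mem_biUnion.1 (MvPolynomial.vars_sum_subset _ _ h)
      rw [Finset.mem_erase, Finset.mem_Icc] at hj
      have hjgt : n + 1 - i < j := lt_of_le_of_ne hj.2.1 (Ne.symm hj.1)
      rcases Finset.mem_union.1 (MvPolynomial.vars_mul _ _ hjv) with h' | h'
      · exact hMZ _ v h'
      · obtain ⟨r, c, hrc⟩ := mem_vars_det (M := Matrix.of fun r c : Fin (n + 1 - k) =>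
          ent Xp (if (r : ℕ) = 0 then j else k + (r : ℕ)) (1 + (c : ℕ))) h'
        refine hNX (if (r : ℕ) = 0 then j else k + (r : ℕ)) ?_ c v hrc
        by_cases hr0 : (r : ℕ) = 0
        · rw [if_pos hr0]; exact hjgt
        · rw [if_neg hr0]; omega
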